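/- Discrete one-step contraction (Theorem 3.2, single step): Let V, Q be finite-dimensional Hilbert spaces, B : V → Q surjective, I_V SPD on V, f ∈ S_{1, L_f} w.r.t. I_V with saddle point (u*, p*) satisfying ∇f(u*) + Bᵀp* = 0, Bu* = b. Let S = B I_V⁻¹ Bᵀ, S̃ and I_Q SPD on Q, β = 1/(2L_f), μ̃ = λ_min(S̃⁻¹S), γ = β μ̃, I_Q⁺ = (1/(1+αγ))(I_Q + αγ S̃), L_S = λ_max((I_Q⁺)⁻¹S). Given (u, p), define the updates u_{1/2} = u − I_V⁻¹(∇f(u) + Bᵀp), p⁺ = p + α (I_Q⁺)⁻¹(B u_{1/2} − b), u⁺ = (1−α)u + α u_{1/2}. If 0 < α ≤ β/(2(L_f + L_S)) · min{μ̃/L_S, 1}, then E⁺ := D_f(u⁺, u*) + (1/2)‖p⁺ − p*‖²_{I_Q⁺} ≤ ρ(α) E where E := D_f(u, u*) + (1/2)‖p − p*‖²_{I_Q} and ρ(α) < 1; in particular with α = β/(4(L_f + L_S))·min{μ̃/L_S, 1}, E⁺ ≤ (1 − (1/2)min{αγ/(1+αγ), αβ}) E. -/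

import Mathlib

open RealInnerProductSpace Matrix

open Matrix in
lemma mat_sym_dot {m : ℕ} {R : Matrix (Fin m) (Fin m) ℝ} (hR : R.IsHermitian)
    (x z : Fin m → ℝ) : (R *ᵥ x) ⬝ᵥ z = x ⬝ᵥ (R *ᵥ z) := by
  rw [dotProduct_comm, dotProduct_mulVec, ← mulVec_transpose]
  rw [show Rᵀ = R from by have := hR.eq; rwa [conjTranspose_eq_transpose_of_trivial] at this]
  rw [dotProduct_comm]

open Matrix in
lemma mat_spec {m : ℕ} (hm : 0 < m) (A M : Matrix (Fin m) (Fin m) ℝ)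
    (hA : A.PosDef) (hM : M.PosDef) :
    0 < sInf (spectrum ℝ (A⁻¹ * M)) ∧ 0 < sSup (spectrum ℝ (A⁻¹ * M)) ∧
    (∀ x : Fin m → ℝ, sInf (spectrum ℝ (A⁻¹ * M)) * (x ⬝ᵥ A *ᵥ x) ≤ x ⬝ᵥ M *ᵥ x) ∧
    (∀ x : Fin m → ℝ, x ⬝ᵥ M *ᵥ x ≤ sSup (spectrum ℝ (A⁻¹ * M)) * (x ⬝ᵥ A *ᵥ x)) := by
  have : Nonempty (Fin m) := ⟨⟨0, hm⟩⟩
  obtain ⟨R, hR, hRR⟩ : ∃ R : Matrix (Fin m) (Fin m) ℝ, R.PosSemidef ∧ R * R = A :=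
    open scoped MatrixOrder in
    ⟨CFC.sqrt A, (CFC.sqrt_nonneg A).posSemidef, CFC.sqrt_mul_sqrt_self A hA.posSemidef.nonneg⟩
  have hdet : IsUnit R.det := by
    have h1 : (0:ℝ) < A.det := hA.det_pos
    rw [← hRR, det_mul] at h1
    exact isUnit_iff_ne_zero.mpr (fun h => by simp [h] at h1)
  have hRu : IsUnit R := (isUnit_iff_isUnit_det R).mpr hdet
  have hRinv : R⁻¹ * R = 1 := nonsing_inv_mul R hdet
  have hRinv' : R * R⁻¹ = 1 := mul_nonsing_inv R hdet
  have hRiH : R⁻¹.IsHermitian := hR.isHermitian.inv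
  obtain ⟨N, hNdef⟩ : ∃ N, N = R⁻¹ * M * R⁻¹ := ⟨_, rfl⟩
  have hNH : N.IsHermitian := by
    rw [hNdef]
    have := isHermitian_conjTranspose_mul_mul (A := M) R⁻¹ hM.1
    rwa [hRiH.eq] at this
  have hNmv : ∀ x : Fin m → ℝ, N *ᵥ x = R⁻¹ *ᵥ (M *ᵥ (R⁻¹ *ᵥ x)) := by
    intro x; rw [hNdef]; simp [mulVec_mulVec, Matrix.mul_assoc]
  have hNpd : N.PosDef := by
    refine .of_dotProduct_mulVec_pos hNH (fun x hx => ?_)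
    have hx' : R⁻¹ *ᵥ x ≠ 0 := by
      intro h
      apply hx
      have := congrArg (R *ᵥ ·) h
      simpa [mulVec_mulVec, hRinv'] using this
    have := hM.dotProduct_mulVec_pos hx'
    simpa [hNmv, star_trivial, mat_sym_dot hRiH] using this
  -- spectrum equality
  have hspec : spectrum ℝ (A⁻¹ * M) = spectrum ℝ N := by
    have hAinv : A⁻¹ = R⁻¹ * R⁻¹ := by rw [← hRR, Matrix.mul_inv_rev]
    have hconj : A⁻¹ * M = R⁻¹ * N * R := by
      rw [hAinv, hNdef]
      rw [Matrix.mul_assoc, Matrix.mul_assoc, Matrix.mul_assoc, hRinv, Matrix.mul_one]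
    rw [hconj]
    have e1 : R⁻¹ * N * R = ((hRu.unit⁻¹ : (Matrix (Fin m) (Fin m) ℝ)ˣ) : Matrix (Fin m) (Fin m) ℝ) * N
        * ((hRu.unit : (Matrix (Fin m) (Fin m) ℝ)ˣ) : Matrix (Fin m) (Fin m) ℝ) := by
      rw [Matrix.coe_units_inv, hRu.unit_spec]
    rw [e1]
    exact spectrum.units_conjugate'
  have hevspec : spectrum ℝ N = Set.range hNH.eigenvalues := hNH.spectrum_real_eq_range_eigenvalues
  have hfin : (Set.range hNH.eigenvalues).Finite := Set.finite_range _
  have hne : (Set.range hNH.eigenvalues).Nonempty := Set.range_nonempty _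
  have hμeq : sInf (spectrum ℝ (A⁻¹ * M)) = sInf (Set.range hNH.eigenvalues) := by
    rw [hspec, hevspec]
  have hLeq : sSup (spectrum ℝ (A⁻¹ * M)) = sSup (Set.range hNH.eigenvalues) := by
    rw [hspec, hevspec]
  obtain ⟨i0, hi0⟩ := hne.csInf_mem hfin
  obtain ⟨i1, hi1⟩ := hne.csSup_mem hfin
  have hμpos : 0 < sInf (Set.range hNH.eigenvalues) := hi0 ▸ hNpd.eigenvalues_pos i0
  have hLpos : 0 < sSup (Set.range hNH.eigenvalues) := hi1 ▸ hNpd.eigenvalues_pos i1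
  have hμle : ∀ i, sInf (Set.range hNH.eigenvalues) ≤ hNH.eigenvalues i :=
    fun i => csInf_le hfin.bddBelow ⟨i, rfl⟩
  have hleL : ∀ i, hNH.eigenvalues i ≤ sSup (Set.range hNH.eigenvalues) :=
    fun i => le_csSup hfin.bddAbove ⟨i, rfl⟩
  -- N - c • 1 decomposition
  have hsm : ∀ c : ℝ, N - c • (1 : Matrix (Fin m) (Fin m) ℝ) =
      (hNH.eigenvectorUnitary : Matrix (Fin m) (Fin m) ℝ) *
        diagonal (fun i => hNH.eigenvalues i - c) *
        star (hNH.eigenvectorUnitary : Matrix (Fin m) (Fin m) ℝ) := by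
    intro c
    have hU : (hNH.eigenvectorUnitary : Matrix (Fin m) (Fin m) ℝ) *
        star (hNH.eigenvectorUnitary : Matrix (Fin m) (Fin m) ℝ) = 1 :=
      Unitary.coe_mul_star_self _
    have h1 : c • (1 : Matrix (Fin m) (Fin m) ℝ) =
        (hNH.eigenvectorUnitary : Matrix (Fin m) (Fin m) ℝ) *
          (c • (1 : Matrix (Fin m) (Fin m) ℝ)) *
          star (hNH.eigenvectorUnitary : Matrix (Fin m) (Fin m) ℝ) := by
      rw [Matrix.mul_smul, Matrix.mul_one, Matrix.smul_mul, hU]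
    have hd : (diagonal (RCLike.ofReal ∘ hNH.eigenvalues) : Matrix (Fin m) (Fin m) ℝ)
        - c • 1 = diagonal (fun i => hNH.eigenvalues i - c) := by
      rw [Matrix.smul_one_eq_diagonal, diagonal_sub]
      congr 1
    conv_lhs => rw [hNH.spectral_theorem, Unitary.conjStarAlgAut_apply, h1, ← Matrix.sub_mul, ← Matrix.mul_sub, hd]
  have hsm' : ∀ c : ℝ, c • (1 : Matrix (Fin m) (Fin m) ℝ) - N =
      (hNH.eigenvectorUnitary : Matrix (Fin m) (Fin m) ℝ) *
        diagonal (fun i => c - hNH.eigenvalues i) *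
        star (hNH.eigenvectorUnitary : Matrix (Fin m) (Fin m) ℝ) := by
    intro c
    have h0 : c • (1 : Matrix (Fin m) (Fin m) ℝ) - N
        = -(N - c • (1 : Matrix (Fin m) (Fin m) ℝ)) := (neg_sub _ _).symm
    rw [h0, hsm c, ← Matrix.neg_mul, ← Matrix.mul_neg, diagonal_neg]
    simp only [neg_sub]
  have hquadN : ∀ y : Fin m → ℝ,
      sInf (Set.range hNH.eigenvalues) * (y ⬝ᵥ y) ≤ y ⬝ᵥ N *ᵥ y ∧
      y ⬝ᵥ N *ᵥ y ≤ sSup (Set.range hNH.eigenvalues) * (y ⬝ᵥ y) := by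
    intro y
    constructor
    · have hps : (N - sInf (Set.range hNH.eigenvalues) • (1 : Matrix (Fin m) (Fin m) ℝ)).PosSemidef := by
        rw [hsm]
        exact (posSemidef_diagonal_iff.mpr (fun i => sub_nonneg.mpr (hμle i))).mul_mul_conjTranspose_same _
      have := hps.dotProduct_mulVec_nonneg y
      simp only [star_trivial, sub_mulVec, dotProduct_sub, smul_mulVec, one_mulVec,
        dotProduct_smul, smul_eq_mul] at this
      linarith
    · have hps : (sSup (Set.range hNH.eigenvalues) • (1 : Matrix (Fin m) (Fin m) ℝ) - N).PosSemidef := by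
        rw [hsm']
        exact (posSemidef_diagonal_iff.mpr
          (fun i => sub_nonneg.mpr (hleL i))).mul_mul_conjTranspose_same _
      have := hps.dotProduct_mulVec_nonneg y
      simp only [star_trivial, sub_mulVec, dotProduct_sub, smul_mulVec, one_mulVec,
        dotProduct_smul, smul_eq_mul] at this
      linarith
  -- transfer to x
  have htrans : ∀ x : Fin m → ℝ,
      (R *ᵥ x) ⬝ᵥ (R *ᵥ x) = x ⬝ᵥ A *ᵥ x ∧ (R *ᵥ x) ⬝ᵥ N *ᵥ (R *ᵥ x) = x ⬝ᵥ M *ᵥ x := by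
    intro x
    constructor
    · rw [mat_sym_dot hR.isHermitian, mulVec_mulVec, hRR]
    · have e2 : R⁻¹ *ᵥ (R *ᵥ x) = x := by rw [mulVec_mulVec, hRinv, one_mulVec]
      have e3 : ∀ w, R *ᵥ (R⁻¹ *ᵥ w) = w := fun w => by rw [mulVec_mulVec, hRinv', one_mulVec]
      rw [mat_sym_dot hR.isHermitian, hNmv, e2, e3]
  refine ⟨hμeq ▸ hμpos, hLeq ▸ hLpos, fun x => ?_, fun x => ?_⟩
  · rw [hμeq, ← (htrans x).1, ← (htrans x).2]
    exact (hquadN _).1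
  · rw [hLeq, ← (htrans x).1, ← (htrans x).2]
    exact (hquadN _).2

open Matrix in
lemma mat_posdef_of {m : ℕ} (X : Matrix (Fin m) (Fin m) ℝ)
    (hsym : ∀ x y : Fin m → ℝ, (X *ᵥ x) ⬝ᵥ y = x ⬝ᵥ (X *ᵥ y))
    (hpos : ∀ x : Fin m → ℝ, x ≠ 0 → 0 < x ⬝ᵥ (X *ᵥ x)) : X.PosDef := by
  refine Matrix.PosDef.of_dotProduct_mulVec_pos ?_ ?_
  · ext i j
    have := hsym (Pi.single j 1) (Pi.single i 1)
    simpa [dotProduct_single, single_dotProduct, mulVec_single] using this.symm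
  · intro x hx
    simpa [star_trivial] using hpos x hx

open Matrix in
lemma op_spec {m : ℕ} (hm : 0 < m)
    (A Ainv M : EuclideanSpace ℝ (Fin m) →ₗ[ℝ] EuclideanSpace ℝ (Fin m))
    (hAsym : ∀ x y, ⟪A x, y⟫ = ⟪x, A y⟫) (hApos : ∀ x, x ≠ 0 → 0 < ⟪A x, x⟫)
    (hMsym : ∀ x y, ⟪M x, y⟫ = ⟪x, M y⟫) (hMpos : ∀ x, x ≠ 0 → 0 < ⟪M x, x⟫)
    (hAinv : Ainv ∘ₗ A = LinearMap.id) :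
    0 < sInf (spectrum ℝ (Ainv ∘ₗ M : Module.End ℝ (EuclideanSpace ℝ (Fin m)))) ∧
    0 < sSup (spectrum ℝ (Ainv ∘ₗ M : Module.End ℝ (EuclideanSpace ℝ (Fin m)))) ∧
    (∀ q, sInf (spectrum ℝ (Ainv ∘ₗ M : Module.End ℝ (EuclideanSpace ℝ (Fin m)))) * ⟪A q, q⟫
        ≤ ⟪M q, q⟫) ∧
    (∀ q, ⟪M q, q⟫
        ≤ sSup (spectrum ℝ (Ainv ∘ₗ M : Module.End ℝ (EuclideanSpace ℝ (Fin m)))) * ⟪A q, q⟫) := by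
  set Φ := Matrix.toLinAlgEquiv (PiLp.basisFun 2 ℝ (Fin m)) with hΦ
  have happ : ∀ (X : Matrix (Fin m) (Fin m) ℝ) (v : EuclideanSpace ℝ (Fin m)),
      (Φ X) v = (X *ᵥ (WithLp.equiv 2 _ v) : Fin m → ℝ) := fun X v => rfl
  have happ' : ∀ (T : EuclideanSpace ℝ (Fin m) →ₗ[ℝ] EuclideanSpace ℝ (Fin m))
      (v : EuclideanSpace ℝ (Fin m)),
      ((Φ.symm T : Matrix (Fin m) (Fin m) ℝ) *ᵥ (WithLp.equiv 2 _ v) : Fin m → ℝ)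
        = WithLp.equiv 2 _ (T v) := by
    intro T v
    rw [← happ (Φ.symm T) v, AlgEquiv.apply_symm_apply]
    rfl
  have hip : ∀ x y : EuclideanSpace ℝ (Fin m),
      ⟪x, y⟫ = (WithLp.equiv 2 _ x : Fin m → ℝ) ⬝ᵥ (WithLp.equiv 2 _ y) := by
    intro x y; rw [PiLp.inner_apply]; simp [dotProduct, mul_comm]
  -- inner products in matrix form
  have hinner : ∀ (T : EuclideanSpace ℝ (Fin m) →ₗ[ℝ] EuclideanSpace ℝ (Fin m))
      (q : EuclideanSpace ℝ (Fin m)),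
      ⟪T q, q⟫ = (WithLp.equiv 2 _ q : Fin m → ℝ) ⬝ᵥ ((Φ.symm T : Matrix (Fin m) (Fin m) ℝ) *ᵥ (WithLp.equiv 2 _ q)) := by
    intro T q
    rw [hip, happ', dotProduct_comm]
  have hMApd : (Φ.symm A : Matrix (Fin m) (Fin m) ℝ).PosDef := by
    apply mat_posdef_of
    · intro x y
      have h1 := happ' A ((WithLp.equiv 2 (Fin m → ℝ)).symm x)
      have h2 := happ' A ((WithLp.equiv 2 (Fin m → ℝ)).symm y)
      simp only [Equiv.apply_symm_apply] at h1 h2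
      rw [h1, h2]
      have := hAsym ((WithLp.equiv 2 (Fin m → ℝ)).symm x) ((WithLp.equiv 2 (Fin m → ℝ)).symm y)
      rw [hip, hip] at this
      simpa [Equiv.apply_symm_apply] using this
    · intro x hx
      have h1 := hinner A ((WithLp.equiv 2 (Fin m → ℝ)).symm x)
      simp only [Equiv.apply_symm_apply] at h1
      rw [← h1]
      apply hApos
      intro h
      exact hx (by simpa using congrArg (WithLp.equiv 2 (Fin m → ℝ)) h)
  have hMMpd : (Φ.symm M : Matrix (Fin m) (Fin m) ℝ).PosDef := by
    apply mat_posdef_of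
    · intro x y
      have h1 := happ' M ((WithLp.equiv 2 (Fin m → ℝ)).symm x)
      have h2 := happ' M ((WithLp.equiv 2 (Fin m → ℝ)).symm y)
      simp only [Equiv.apply_symm_apply] at h1 h2
      rw [h1, h2]
      have := hMsym ((WithLp.equiv 2 (Fin m → ℝ)).symm x) ((WithLp.equiv 2 (Fin m → ℝ)).symm y)
      rw [hip, hip] at this
      simpa [Equiv.apply_symm_apply] using this
    · intro x hx
      have h1 := hinner M ((WithLp.equiv 2 (Fin m → ℝ)).symm x)
      simp only [Equiv.apply_symm_apply] at h1
      rw [← h1]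
      apply hMpos
      intro h
      exact hx (by simpa using congrArg (WithLp.equiv 2 (Fin m → ℝ)) h)
  have hinv : (Φ.symm A : Matrix (Fin m) (Fin m) ℝ)⁻¹ = Φ.symm Ainv := by
    apply Matrix.inv_eq_left_inv
    rw [← _root_.map_mul, Module.End.mul_eq_comp, hAinv, ← Module.End.one_eq_id, _root_.map_one]
  have hspec : spectrum ℝ (Ainv ∘ₗ M : Module.End ℝ (EuclideanSpace ℝ (Fin m)))
      = spectrum ℝ ((Φ.symm A : Matrix (Fin m) (Fin m) ℝ)⁻¹ * Φ.symm M) := by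
    rw [hinv]
    have h1 : (Φ.symm (Ainv ∘ₗ M) : Matrix (Fin m) (Fin m) ℝ) = Φ.symm Ainv * Φ.symm M := by
      rw [← _root_.map_mul, Module.End.mul_eq_comp]
    rw [← h1]
    exact (AlgEquiv.spectrum_eq Φ.symm _).symm
  obtain ⟨hpos1, hpos2, hlo, hhi⟩ := mat_spec hm (Φ.symm A) (Φ.symm M) hMApd hMMpd
  refine ⟨hspec ▸ hpos1, hspec ▸ hpos2, fun q => ?_, fun q => ?_⟩
  · rw [hspec, hinner A q, hinner M q]
    exact hlo _
  · rw [hspec, hinner A q, hinner M q]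
    exact hhi _


section aux
variable {n : ℕ} (IV IVinv : EuclideanSpace ℝ (Fin n) →ₗ[ℝ] EuclideanSpace ℝ (Fin n))

lemma iv_nonneg (hIVpos : ∀ x, x ≠ 0 → 0 < ⟪IV x, x⟫) (z : EuclideanSpace ℝ (Fin n)) :
    0 ≤ ⟪IV z, z⟫ := by
  rcases eq_or_ne z 0 with h | h
  · simp [h]
  · exact (hIVpos z h).le

lemma young_ineq (hIVsym : ∀ x y, ⟪IV x, y⟫ = ⟪x, IV y⟫)
    (hIVpos : ∀ x, x ≠ 0 → 0 < ⟪IV x, x⟫)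
    (hIVinv' : IV ∘ₗ IVinv = LinearMap.id)
    {c : ℝ} (hc : 0 < c) (x g : EuclideanSpace ℝ (Fin n)) :
    ⟪x, g⟫ ≤ 1/(4*c) * ⟪IV x, x⟫ + c * ⟪IVinv g, g⟫ := by
  have hIVg : IV (IVinv g) = g := LinearMap.congr_fun hIVinv' g
  have hz : 0 ≤ ⟪IV (x - (2*c) • IVinv g), x - (2*c) • IVinv g⟫ := iv_nonneg IV hIVpos _
  have hexp : ⟪IV (x - (2*c) • IVinv g), x - (2*c) • IVinv g⟫
      = ⟪IV x, x⟫ - 4*c*⟪x, g⟫ + 4*c^2*⟪IVinv g, g⟫ := by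
    rw [_root_.map_sub, _root_.map_smul, hIVg]
    rw [inner_sub_left, inner_sub_right, inner_sub_right, real_inner_smul_left,
      real_inner_smul_right, real_inner_smul_left, real_inner_smul_right]
    rw [hIVsym x (IVinv g), hIVg, real_inner_comm g x, real_inner_comm g (IVinv g)]
    ring
  rw [hexp] at hz
  have hz2 := mul_le_mul_of_nonneg_left hz (by positivity : (0:ℝ) ≤ 1/(4*c))
  rw [mul_zero] at hz2
  have heq : 1/(4*c) * (⟪IV x, x⟫ - 4*c*⟪x, g⟫ + 4*c^2*⟪IVinv g, g⟫)
      = 1/(4*c) * ⟪IV x, x⟫ - ⟪x, g⟫ + c * ⟪IVinv g, g⟫ := by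
    field_simp
  rw [heq] at hz2
  linarith
end aux

section breg
variable {n : ℕ} (f : EuclideanSpace ℝ (Fin n) → ℝ)
  (IV IVinv : EuclideanSpace ℝ (Fin n) →ₗ[ℝ] EuclideanSpace ℝ (Fin n))

lemma breg_lower (hIVsym : ∀ x y, ⟪IV x, y⟫ = ⟪x, IV y⟫)
    (hIVpos : ∀ x, x ≠ 0 → 0 < ⟪IV x, x⟫)
    (hIVinv' : IV ∘ₗ IVinv = LinearMap.id)
    {Lf : ℝ} (hLf : 1 ≤ Lf)
    (hlow : ∀ u v, 1/2 * ⟪IV (u - v), u - v⟫ ≤ f u - f v - ⟪gradient f v, u - v⟫)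
    (hup : ∀ u v, f u - f v - ⟪gradient f v, u - v⟫ ≤ Lf/2 * ⟪IV (u - v), u - v⟫)
    (u v : EuclideanSpace ℝ (Fin n)) :
    1/(2*Lf) * ⟪IVinv (gradient f u - gradient f v), gradient f u - gradient f v⟫
      ≤ f u - f v - ⟪gradient f v, u - v⟫ := by
  have hLf0 : 0 < Lf := lt_of_lt_of_le one_pos hLf
  set d := gradient f u - gradient f v with hd
  set t := 1/Lf with ht
  have hLft : Lf * t = 1 := by rw [ht]; field_simp
  set y := u - t • IVinv d with hy
  have hIVd : IV (IVinv d) = d := LinearMap.congr_fun hIVinv' d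
  set a2 := ⟪IVinv d, d⟫ with ha2
  have hyu : y - u = -(t • IVinv d) := by rw [hy]; abel
  have e1 : ⟪IV (y - u), y - u⟫ = t^2 * a2 := by
    rw [hyu, map_neg, _root_.map_smul, hIVd, inner_neg_neg, real_inner_smul_left,
      real_inner_smul_right, ha2, real_inner_comm (IVinv d) d]
    ring
  have e2 : ⟪gradient f u, y - u⟫ = -(t * ⟪gradient f u, IVinv d⟫) := by
    rw [hyu, inner_neg_right, real_inner_smul_right]
  have e3 : ⟪gradient f v, y - v⟫ = ⟪gradient f v, u - v⟫ - t * ⟪gradient f v, IVinv d⟫ := by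
    rw [show y - v = (u - v) - t • IVinv d by rw [hy]; abel, inner_sub_right,
      real_inner_smul_right]
  have e4 : ⟪gradient f u, IVinv d⟫ - ⟪gradient f v, IVinv d⟫ = a2 := by
    rw [ha2, ← inner_sub_left, ← hd, real_inner_comm]
  have h1 := hup y u
  have h2 := hlow y v
  have h3 : 0 ≤ ⟪IV (y - v), y - v⟫ := iv_nonneg IV hIVpos _
  rw [e1] at h1
  rw [e2] at h1
  rw [e3] at h2
  have e5 : Lf/2 * (t^2 * a2) = t/2 * a2 := by
    have : Lf/2 * (t^2 * a2) = (Lf*t) * (t/2 * a2) := by ring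
    rw [this, hLft, one_mul]
  rw [e5] at h1
  have e6 : 1/(2*Lf) * a2 = t/2 * a2 := by rw [ht]; ring
  rw [e6]
  -- goal: t/2 * a2 ≤ f u - f v - ⟪gradient f v, u - v⟫
  have hG : t * ⟪gradient f u, IVinv d⟫ - t * ⟪gradient f v, IVinv d⟫ = t * a2 := by
    rw [← mul_sub, e4]
  have hta : t * a2 - t/2 * a2 = t/2 * a2 := by ring
  linarith [h1, h2, h3]
end breg
section quadhelp
open RealInnerProductSpace
variable {n : ℕ} (IV : EuclideanSpace ℝ (Fin n) →ₗ[ℝ] EuclideanSpace ℝ (Fin n))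

lemma quad_sub (hIVsym : ∀ x y, ⟪IV x, y⟫ = ⟪x, IV y⟫) (x y : EuclideanSpace ℝ (Fin n)) :
    ⟪IV (x - y), x - y⟫ = ⟪IV x, x⟫ - 2*⟪IV x, y⟫ + ⟪IV y, y⟫ := by
  rw [_root_.map_sub, inner_sub_left, inner_sub_right, inner_sub_right,
    hIVsym y x, real_inner_comm y (IV x)]
  ring
end quadhelp
set_option maxHeartbeats 1000000 in
open RealInnerProductSpace in
/-- Theorem 3.2, one step of the TPDv algorithm: contraction of the Lyapunov function. -/
theorem stmt_17 {n m : ℕ}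
    (f : EuclideanSpace ℝ (Fin n) → ℝ) (hf : Differentiable ℝ f)
    (B : EuclideanSpace ℝ (Fin n) →ₗ[ℝ] EuclideanSpace ℝ (Fin m))
    (hBsurj : Function.Surjective B)
    (Bt : EuclideanSpace ℝ (Fin m) →ₗ[ℝ] EuclideanSpace ℝ (Fin n))
    (hBt : ∀ v q, ⟪B v, q⟫ = ⟪v, Bt q⟫)
    (IV IVinv : EuclideanSpace ℝ (Fin n) →ₗ[ℝ] EuclideanSpace ℝ (Fin n))
    (hIVsym : ∀ x y, ⟪IV x, y⟫ = ⟪x, IV y⟫) (hIVpos : ∀ x, x ≠ 0 → 0 < ⟪IV x, x⟫)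
    (hIVinv : IVinv ∘ₗ IV = LinearMap.id) (hIVinv' : IV ∘ₗ IVinv = LinearMap.id)
    (Lf : ℝ) (hLf : 1 ≤ Lf)
    (hlow : ∀ u v, 1/2 * ⟪IV (u - v), u - v⟫ ≤ f u - f v - ⟪gradient f v, u - v⟫)
    (hup : ∀ u v, f u - f v - ⟪gradient f v, u - v⟫ ≤ Lf/2 * ⟪IV (u - v), u - v⟫)
    (ustar : EuclideanSpace ℝ (Fin n)) (pstar b : EuclideanSpace ℝ (Fin m))
    (hsaddle : gradient f ustar + Bt pstar = 0) (hconstraint : B ustar = b)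
    (S : EuclideanSpace ℝ (Fin m) →ₗ[ℝ] EuclideanSpace ℝ (Fin m))
    (hS : S = B ∘ₗ IVinv ∘ₗ Bt)
    (St Stinv IQ : EuclideanSpace ℝ (Fin m) →ₗ[ℝ] EuclideanSpace ℝ (Fin m))
    (hStsym : ∀ x y, ⟪St x, y⟫ = ⟪x, St y⟫) (hStpos : ∀ x, x ≠ 0 → 0 < ⟪St x, x⟫)
    (hIQsym : ∀ x y, ⟪IQ x, y⟫ = ⟪x, IQ y⟫) (hIQpos : ∀ x, x ≠ 0 → 0 < ⟪IQ x, x⟫)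
    (hStinv : Stinv ∘ₗ St = LinearMap.id) (hStinv' : St ∘ₗ Stinv = LinearMap.id)
    (β μt γ α : ℝ)
    (hβ : β = 1/(2*Lf))
    (hμt : μt = sInf (spectrum ℝ (Stinv ∘ₗ S : Module.End ℝ (EuclideanSpace ℝ (Fin m)))))
    (hγ : γ = β * μt)
    (IQplus IQplusinv : EuclideanSpace ℝ (Fin m) →ₗ[ℝ] EuclideanSpace ℝ (Fin m))
    (hIQplus : IQplus = (1/(1 + α*γ)) • (IQ + (α*γ) • St))
    (hIQplusinv : IQplusinv ∘ₗ IQplus = LinearMap.id)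
    (hIQplusinv' : IQplus ∘ₗ IQplusinv = LinearMap.id)
    (LS : ℝ)
    (hLS : LS = sSup (spectrum ℝ
      (IQplusinv ∘ₗ S : Module.End ℝ (EuclideanSpace ℝ (Fin m)))))
    (u uhalf uplus : EuclideanSpace ℝ (Fin n)) (p pplus : EuclideanSpace ℝ (Fin m))
    (huhalf : uhalf = u - IVinv (gradient f u + Bt p))
    (hpplus : pplus = p + α • IQplusinv (B uhalf - b))
    (huplus : uplus = (1 - α) • u + α • uhalf)
    (E Eplus : ℝ)
    (hE : E = f u - f ustar - ⟪gradient f ustar, u - ustar⟫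
        + 1/2 * ⟪IQ (p - pstar), p - pstar⟫)
    (hEplus : Eplus = f uplus - f ustar - ⟪gradient f ustar, uplus - ustar⟫
        + 1/2 * ⟪IQplus (pplus - pstar), pplus - pstar⟫)
    (hα0 : 0 < α) (hαbound : α ≤ β/(2*(Lf + LS)) * min (μt/LS) 1) :
    (∃ ρ : ℝ, ρ < 1 ∧ Eplus ≤ ρ * E) ∧
      (α = β/(4*(Lf + LS)) * min (μt/LS) 1 →
        Eplus ≤ (1 - 1/2 * min (α*γ/(1 + α*γ)) (α*β)) * E) := by
  have hLf0 : (0:ℝ) < Lf := by linarith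
  have hβ0 : 0 < β := by rw [hβ]; positivity
  have hβLf : β * Lf = 1/2 := by rw [hβ]; field_simp
  have hβhalf : β ≤ 1/2 := by nlinarith
  have h1mβ : 0 < 1 - β := by linarith
  -- degenerate case m = 0
  rcases Nat.eq_zero_or_pos m with hm0 | hm
  · exfalso
    have hsub : Subsingleton (EuclideanSpace ℝ (Fin m)) := by
      subst hm0; infer_instance
    have hend : Subsingleton (Module.End ℝ (EuclideanSpace ℝ (Fin m))) :=
      ⟨fun a b => LinearMap.ext fun x => Subsingleton.elim _ _⟩
    have hspec0 : ∀ T : Module.End ℝ (EuclideanSpace ℝ (Fin m)),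
        spectrum ℝ T = (∅ : Set ℝ) := by
      intro T
      ext z
      simp only [Set.mem_empty_iff_false, iff_false, spectrum.mem_iff, not_not]
      exact isUnit_of_subsingleton _
    have hμt0 : μt = 0 := by rw [hμt, hspec0, Real.sInf_empty]
    have hLS0 : LS = 0 := by rw [hLS, hspec0, Real.sSup_empty]
    rw [hμt0, hLS0] at hαbound
    norm_num at hαbound
    linarith
  -- derived operator facts
  have hIVg : ∀ z, IV (IVinv z) = z := fun z => LinearMap.congr_fun hIVinv' z
  have hIVisym : ∀ x y, ⟪IVinv x, y⟫ = ⟪x, IVinv y⟫ := by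
    intro x y
    calc ⟪IVinv x, y⟫ = ⟪IVinv x, IV (IVinv y)⟫ := by rw [hIVg]
    _ = ⟪IV (IVinv x), IVinv y⟫ := (hIVsym _ _).symm
    _ = ⟪x, IVinv y⟫ := by rw [hIVg]
  have hIVipos : ∀ x, x ≠ 0 → 0 < ⟪IVinv x, x⟫ := by
    intro x hx
    have h1 : IVinv x ≠ 0 := fun h => hx (by rw [← hIVg x, h, map_zero])
    have h2 := hIVpos (IVinv x) h1
    rw [hIVg x, real_inner_comm] at h2
    exact h2
  have hBtne : ∀ q, q ≠ 0 → Bt q ≠ 0 := by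
    intro q hq h
    obtain ⟨v, hv⟩ := hBsurj q
    apply hq
    have h2 : ⟪B v, q⟫ = 0 := by rw [hBt, h, inner_zero_right]
    rw [hv] at h2
    exact inner_self_eq_zero.mp h2
  have hSip : ∀ q q', ⟪S q, q'⟫ = ⟪IVinv (Bt q), Bt q'⟫ := by
    intro q q'
    rw [hS]
    simp only [LinearMap.comp_apply]
    rw [hBt]
  have hSsym : ∀ x y, ⟪S x, y⟫ = ⟪x, S y⟫ := by
    intro x y
    rw [hSip x y, hIVisym, real_inner_comm, ← hSip y x, real_inner_comm]
  have hSpos : ∀ x, x ≠ 0 → 0 < ⟪S x, x⟫ := fun x hx => by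
    rw [hSip]; exact hIVipos _ (hBtne x hx)
  -- spectral facts for St
  obtain ⟨hμt0, -, hμlow, -⟩ := op_spec hm St Stinv S hStsym hStpos hSsym hSpos hStinv
  rw [← hμt] at hμt0 hμlow
  have hγ0 : 0 < γ := by rw [hγ]; positivity
  have hαγ0 : 0 < α * γ := mul_pos hα0 hγ0
  have h1αγ : 0 < 1 + α*γ := by linarith
  -- IQplus symmetric positive
  have hIQpapp : ∀ x, IQplus x = (1/(1+α*γ)) • (IQ x) + (1/(1+α*γ)) • ((α*γ) • (St x)) := by
    intro x
    rw [hIQplus]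
    simp only [LinearMap.smul_apply, LinearMap.add_apply, smul_add]
  have hIQpsym : ∀ x y, ⟪IQplus x, y⟫ = ⟪x, IQplus y⟫ := by
    intro x y
    rw [hIQpapp, hIQpapp]
    simp only [inner_add_left, inner_add_right, real_inner_smul_left, real_inner_smul_right]
    rw [hIQsym, hStsym]
  have hIQppos : ∀ x, x ≠ 0 → 0 < ⟪IQplus x, x⟫ := by
    intro x hx
    rw [hIQpapp]
    simp only [inner_add_left, real_inner_smul_left]
    have h1 := hIQpos x hx
    have h2 := hStpos x hx
    have h3 : 0 < 1/(1+α*γ) := by positivity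
    have h4 : 0 < α*γ := hαγ0
    positivity
  obtain ⟨-, hLSpos, -, hShigh⟩ :=
    op_spec hm IQplus IQplusinv S hIQpsym hIQppos hSsym hSpos hIQplusinv
  rw [← hLS] at hLSpos hShigh
  have hLfLS : 0 < Lf + LS := by linarith
  have hK : α * (Lf + LS) ≤ β/2 := by
    have h1 : min (μt/LS) 1 ≤ 1 := min_le_right _ _
    have h0 : 0 < β/(2*(Lf+LS)) := by positivity
    have h2 : α ≤ β/(2*(Lf+LS)) := hαbound.trans (mul_le_of_le_one_right h0.le h1)
    have h3 : (β/(2*(Lf+LS))) * (Lf+LS) = β/2 := by field_simp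
    calc α * (Lf+LS) ≤ (β/(2*(Lf+LS))) * (Lf+LS) :=
          mul_le_mul_of_nonneg_right h2 hLfLS.le
    _ = β/2 := h3
  -- the LS quadratic bound
  have hR2bound : ∀ x, ⟪IQplusinv (B x), B x⟫ ≤ LS * ⟪IV x, x⟫ := by
    intro x
    have hq : IQplus (IQplusinv (B x)) = B x := LinearMap.congr_fun hIQplusinv' (B x)
    have hL : ⟪IQplusinv (B x), B x⟫ = ⟪x, Bt (IQplusinv (B x))⟫ := by
      rw [real_inner_comm, hBt]
    have hy := young_ineq IV IVinv hIVsym hIVpos hIVinv'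
      (show (0:ℝ) < 1/(2*LS) by positivity) x (Bt (IQplusinv (B x)))
    have e1 : 1/(4*(1/(2*LS))) = LS/2 := by field_simp; ring
    have e2 : ⟪IVinv (Bt (IQplusinv (B x))), Bt (IQplusinv (B x))⟫
        = ⟪S (IQplusinv (B x)), IQplusinv (B x)⟫ := (hSip _ _).symm
    have e3 : ⟪S (IQplusinv (B x)), IQplusinv (B x)⟫
        ≤ LS * ⟪IQplus (IQplusinv (B x)), IQplusinv (B x)⟫ := hShigh _
    have e4 : ⟪IQplus (IQplusinv (B x)), IQplusinv (B x)⟫ = ⟪x, Bt (IQplusinv (B x))⟫ := by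
      rw [hq, hBt]
    rw [e1, e2] at hy
    rw [e4] at e3
    have e5 := mul_le_mul_of_nonneg_left e3 (show (0:ℝ) ≤ 1/(2*LS) by positivity)
    have e6 : 1/(2*LS) * (LS * ⟪x, Bt (IQplusinv (B x))⟫)
        = 1/2 * ⟪x, Bt (IQplusinv (B x))⟫ := by field_simp
    rw [e6] at e5
    rw [hL]
    linarith
  -- vectors
  obtain ⟨e, he⟩ : ∃ e, e = u - ustar := ⟨_, rfl⟩
  obtain ⟨ep, hep⟩ : ∃ ep, ep = p - pstar := ⟨_, rfl⟩
  obtain ⟨g, hg⟩ : ∃ g, g = Bt ep := ⟨_, rfl⟩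
  obtain ⟨δ, hδ⟩ : ∃ d, d = gradient f u - gradient f ustar := ⟨_, rfl⟩
  obtain ⟨w, hwd⟩ : ∃ w, w = δ + g := ⟨_, rfl⟩
  have hw : gradient f u + Bt p = w := by
    rw [hwd, hδ, hg, hep, map_sub]
    rw [show gradient f u - gradient f ustar + (Bt p - Bt pstar)
        = gradient f u + Bt p - (gradient f ustar + Bt pstar) from by abel, hsaddle, sub_zero]
  have huh : uhalf = u - IVinv w := by rw [huhalf, hw]
  have hud : uplus - u = -(α • IVinv w) := by rw [huplus, huh]; module
  have hrr : B uhalf - b = B (e - IVinv w) := by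
    rw [huh, ← hconstraint, ← map_sub, he]
    congr 1
    abel
  have hppe : pplus - pstar = ep + α • IQplusinv (B (e - IVinv w)) := by
    rw [hpplus, hrr, hep]
    abel
  -- scalars
  obtain ⟨A2, hA2⟩ : ∃ r, r = ⟪IVinv δ, δ⟫ := ⟨_, rfl⟩
  obtain ⟨H2, hH2⟩ : ∃ r, r = ⟪IVinv g, g⟫ := ⟨_, rfl⟩
  obtain ⟨M2, hM2⟩ : ∃ r, r = ⟪IV e, e⟫ := ⟨_, rfl⟩
  obtain ⟨W2, hW2d⟩ : ∃ r, r = ⟪IVinv w, w⟫ := ⟨_, rfl⟩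
  obtain ⟨c2, hc2⟩ : ∃ r, r = ⟪IVinv δ, g⟫ := ⟨_, rfl⟩
  obtain ⟨ed, hed⟩ : ∃ r, r = ⟪e, δ⟫ := ⟨_, rfl⟩
  obtain ⟨eg, heg⟩ : ∃ r, r = ⟪e, g⟫ := ⟨_, rfl⟩
  obtain ⟨D, hD⟩ : ∃ r, r = f u - f ustar - ⟪gradient f ustar, u - ustar⟫ := ⟨_, rfl⟩
  obtain ⟨Ds, hDs⟩ : ∃ r, r = f ustar - f u - ⟪gradient f u, ustar - u⟫ := ⟨_, rfl⟩
  obtain ⟨P0, hP0⟩ : ∃ r, r = ⟪IQ ep, ep⟫ := ⟨_, rfl⟩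
  obtain ⟨PSt, hPSt⟩ : ∃ r, r = ⟪St ep, ep⟫ := ⟨_, rfl⟩
  obtain ⟨PQ, hPQd⟩ : ∃ r, r = ⟪IQplus ep, ep⟫ := ⟨_, rfl⟩
  obtain ⟨R2, hR2⟩ : ∃ r, r = ⟪IQplusinv (B (e - IVinv w)), B (e - IVinv w)⟫ := ⟨_, rfl⟩
  obtain ⟨Q2, hQ2⟩ : ∃ r, r = ⟪IV (e - (2:ℝ) • IVinv δ), e - (2:ℝ) • IVinv δ⟫ := ⟨_, rfl⟩
  obtain ⟨Z2, hZ2⟩ : ∃ r, r = ⟪IV (e - IVinv w), e - IVinv w⟫ := ⟨_, rfl⟩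
  obtain ⟨z2, hz2⟩ : ∃ r, r = ⟪IV (e - IVinv δ), e - IVinv δ⟫ := ⟨_, rfl⟩
  obtain ⟨X, hX⟩ : ∃ r, r = ⟪e - (2:ℝ) • IVinv δ, g⟫ := ⟨_, rfl⟩
  obtain ⟨z0g, hz0g⟩ : ∃ r, r = ⟪e - IVinv δ, g⟫ := ⟨_, rfl⟩
  obtain ⟨dIw, hdIw⟩ : ∃ r, r = ⟪δ, IVinv w⟫ := ⟨_, rfl⟩
  obtain ⟨CR, hCR⟩ : ∃ r, r = ⟪e - IVinv w, g⟫ := ⟨_, rfl⟩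
  -- nonnegativity
  have hIVinn : ∀ z, 0 ≤ ⟪IVinv z, z⟫ := by
    intro z
    rcases eq_or_ne z 0 with h | h
    · simp [h]
    · exact (hIVipos z h).le
  have hA2nn : 0 ≤ A2 := hA2 ▸ hIVinn δ
  have hH2nn : 0 ≤ H2 := hH2 ▸ hIVinn g
  have hM2nn : 0 ≤ M2 := hM2 ▸ iv_nonneg IV hIVpos e
  have hz2nn : 0 ≤ z2 := hz2 ▸ iv_nonneg IV hIVpos _
  have hP0nn : 0 ≤ P0 := by
    rw [hP0]
    rcases eq_or_ne ep 0 with h | h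
    · simp [h]
    · exact (hIQpos ep h).le
  have hPStnn : 0 ≤ PSt := by
    rw [hPSt]
    rcases eq_or_ne ep 0 with h | h
    · simp [h]
    · exact (hStpos ep h).le
  -- primal inequality
  have hIVw : IV (IVinv w) = w := hIVg w
  have hq1 : ⟪IV (uplus - u), uplus - u⟫ = α^2 * W2 := by
    rw [hud, _root_.map_neg, _root_.map_smul, inner_neg_neg, real_inner_smul_left,
      real_inner_smul_right, hIVw, real_inner_comm (IVinv w) w, ← hW2d]
    ring
  have hq2 : ⟪gradient f u, uplus - u⟫ = -(α * ⟪gradient f u, IVinv w⟫) := by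
    rw [hud, inner_neg_right, real_inner_smul_right]
  have hq3 : ⟪gradient f ustar, uplus - ustar⟫
      = ⟪gradient f ustar, u - ustar⟫ - α * ⟪gradient f ustar, IVinv w⟫ := by
    rw [show uplus - ustar = (u - ustar) + (uplus - u) from by abel, inner_add_right, hud,
      inner_neg_right, real_inner_smul_right]
    ring
  have hq4 : ⟪gradient f u, IVinv w⟫ - ⟪gradient f ustar, IVinv w⟫ = dIw := by
    rw [← inner_sub_left, ← hδ]
    exact hdIw.symm
  have hq5 : α * ⟪gradient f u, IVinv w⟫ - α * ⟪gradient f ustar, IVinv w⟫ = α * dIw := by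
    rw [← mul_sub, hq4]
  have hDplus : f uplus - f ustar - ⟪gradient f ustar, uplus - ustar⟫
      ≤ D - α * dIw + Lf/2 * (α^2 * W2) := by
    have h := hup uplus u
    rw [hq1, hq2] at h
    rw [hq3, hD]
    linarith [h, hq5]
  -- dual expansion
  have hIQq : IQplus (IQplusinv (B (e - IVinv w))) = B (e - IVinv w) :=
    LinearMap.congr_fun hIQplusinv' _
  have hCRr : ⟪B (e - IVinv w), ep⟫ = CR := by
    rw [hBt, ← hg]
    exact hCR.symm
  have k1 : ⟪IQplus ep, IQplusinv (B (e - IVinv w))⟫ = CR := by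
    rw [hIQpsym, hIQq, real_inner_comm]
    exact hCRr
  have k2 : ⟪IQplus (IQplusinv (B (e - IVinv w))), ep⟫ = CR := by
    rw [hIQq]
    exact hCRr
  have k3 : ⟪IQplus (IQplusinv (B (e - IVinv w))), IQplusinv (B (e - IVinv w))⟫ = R2 := by
    rw [hIQq, real_inner_comm]
    exact hR2.symm
  have hPplus : ⟪IQplus (pplus - pstar), pplus - pstar⟫ = PQ + 2*α*CR + α^2 * R2 := by
    rw [hppe, map_add, _root_.map_smul]
    simp only [inner_add_left, inner_add_right, real_inner_smul_left, real_inner_smul_right]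
    rw [k1, k2, k3, ← hPQd]
    ring
  -- cross-term identity
  have hIVinvw : IVinv w = IVinv δ + IVinv g := by rw [hwd, map_add]
  have ia : ⟪δ, IVinv δ⟫ = A2 := by rw [hA2, real_inner_comm]
  have ib : ⟪δ, IVinv g⟫ = c2 := by rw [hc2, hIVisym]
  have ie : ⟪δ, IVinv w⟫ = A2 + c2 := by rw [hIVinvw, inner_add_right, ia, ib]
  have i1 : dIw = A2 + c2 := hdIw.trans ie
  have i2 : CR = eg - c2 - H2 := by
    rw [hCR, inner_sub_left, hIVinvw, inner_add_left, ← hc2, ← hH2, ← heg]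
    ring
  have i3 : X = eg - 2*c2 := by
    rw [hX, inner_sub_left, real_inner_smul_left, ← hc2, ← heg]
  have hTid : -dIw + CR = -A2 - H2 + X := by rw [i1, i2, i3]; ring
  -- quadratic expansions
  have j1 : ⟪IV e, (2:ℝ) • IVinv δ⟫ = 2*ed := by
    rw [real_inner_smul_right, hIVsym, hIVg, ← hed]
  have j2 : ⟪IV ((2:ℝ) • IVinv δ), (2:ℝ) • IVinv δ⟫ = 4*A2 := by
    rw [_root_.map_smul, real_inner_smul_left, real_inner_smul_right, hIVg,
      real_inner_comm (IVinv δ) δ, ← hA2]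
    ring
  have hquadQ : Q2 = M2 - 4*ed + 4*A2 := by
    rw [hQ2, quad_sub IV hIVsym, j1, j2, ← hM2]
    ring
  have j3 : ⟪IV e, IVinv δ⟫ = ed := by rw [hIVsym, hIVg, ← hed]
  have j4 : ⟪IV (IVinv δ), IVinv δ⟫ = A2 := by
    rw [hIVg, real_inner_comm (IVinv δ) δ, ← hA2]
  have hquadz : z2 = M2 - 2*ed + A2 := by
    rw [hz2, quad_sub IV hIVsym, j3, j4, ← hM2]
  have hzw : e - IVinv w = (e - IVinv δ) - IVinv g := by rw [hIVinvw]; abel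
  have j5 : ⟪IV (e - IVinv δ), IVinv g⟫ = z0g := by rw [hIVsym, hIVg, ← hz0g]
  have j6 : ⟪IV (IVinv g), IVinv g⟫ = H2 := by
    rw [hIVg, real_inner_comm (IVinv g) g, ← hH2]
  have hquadZ : Z2 = z2 - 2*z0g + H2 := by
    rw [hZ2, hzw, quad_sub IV hIVsym, j5, j6, ← hz2]
  have j7 : ⟪IVinv g, δ⟫ = c2 := by
    rw [real_inner_comm]
    exact ib
  have hquadW : W2 = A2 + 2*c2 + H2 := by
    rw [hW2d, hIVinvw, hwd, inner_add_left, inner_add_right, inner_add_right,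
      ← hA2, ← hH2, ← hc2, j7]
    ring
  -- Bregman facts
  have hedDDs : ed = D + Ds := by
    rw [hed, he, hδ, inner_sub_right, hD, hDs,
      show ustar - u = -(u - ustar) from by abel, inner_neg_right,
      real_inner_comm (gradient f u) (u - ustar), real_inner_comm (gradient f ustar) (u - ustar)]
    ring
  have hbr1 : β * A2 ≤ D := by
    have h := breg_lower f IV IVinv hIVsym hIVpos hIVinv' hLf hlow hup u ustar
    rw [← hβ, ← hD, ← hδ, ← hA2] at h
    exact h
  have hbr2 : β * A2 ≤ Ds := by
    have h := breg_lower f IV IVinv hIVsym hIVpos hIVinv' hLf hlow hup ustar u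
    rw [← hβ, ← hDs] at h
    have e1 : gradient f ustar - gradient f u = -δ := by rw [hδ]; abel
    rw [e1, _root_.map_neg, inner_neg_neg, ← hA2] at h
    exact h
  have hlow1 : M2 ≤ 2*D := by
    have h := hlow u ustar
    rw [← hD, ← he, ← hM2] at h
    linarith
  have hlow2 : M2 ≤ 2*Ds := by
    have h := hlow ustar u
    rw [← hDs] at h
    have e2 : ⟪IV (ustar - u), ustar - u⟫ = M2 := by
      rw [show ustar - u = -e from by rw [he]; abel, _root_.map_neg, inner_neg_neg, ← hM2]
    rw [e2] at h
    linarith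
  have hDnn : 0 ≤ D := by linarith
  -- Young inequalities
  have hJ1 : X ≤ 1/(4*(1-β)) * Q2 + (1-β) * H2 := by
    have h := young_ineq IV IVinv hIVsym hIVpos hIVinv' h1mβ (e - (2:ℝ) • IVinv δ) g
    rw [← hX, ← hQ2, ← hH2] at h
    exact h
  have hJ3 : c2 ≤ 1/2*A2 + 1/2*H2 := by
    have h := young_ineq IV IVinv hIVsym hIVpos hIVinv'
      (show (0:ℝ) < 1/2 by norm_num) (IVinv δ) g
    rw [← hc2, j4, ← hH2] at h
    norm_num at h
    linarith
  have hJ2 : -(2*z0g) ≤ z2 + H2 := by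
    have h := young_ineq IV IVinv hIVsym hIVpos hIVinv' one_pos ((-2:ℝ) • (e - IVinv δ)) g
    have e1 : ⟪((-2:ℝ) • (e - IVinv δ)), g⟫ = -(2*z0g) := by
      rw [real_inner_smul_left, ← hz0g]
      ring
    have e2 : ⟪IV ((-2:ℝ) • (e - IVinv δ)), (-2:ℝ) • (e - IVinv δ)⟫ = 4*z2 := by
      rw [_root_.map_smul, real_inner_smul_left, real_inner_smul_right, ← hz2]
      ring
    rw [e1, e2, ← hH2] at h
    linarith
  have hz2A2 : z2 ≤ A2 := by linarith [hquadz, hedDDs, hlow1, hlow2]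
  have hA2D : A2 ≤ 2*Lf*D := by
    have h := mul_le_mul_of_nonneg_left hbr1 (by positivity : (0:ℝ) ≤ 2*Lf)
    have e1 : 2*Lf*(β*A2) = A2 := by
      rw [show 2*Lf*(β*A2) = (β*Lf)*(2*A2) from by ring, hβLf]
      ring
    linarith
  have hR2LS : R2 ≤ LS * Z2 := by
    have h := hR2bound (e - IVinv w)
    rw [← hR2, ← hZ2] at h
    exact h
  have hne1αγ : (1 + α*γ) ≠ 0 := ne_of_gt h1αγ
  have hPQ : PQ = 1/(1+α*γ) * P0 + (α*γ/(1+α*γ)) * PSt := by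
    rw [hPQd, hIQpapp]
    simp only [inner_add_left, real_inner_smul_left]
    rw [← hP0, ← hPSt]
    ring
  have hH2S : ⟪S ep, ep⟫ = H2 := by rw [hSip, ← hg, ← hH2]
  have hμH2 : μt * PSt ≤ H2 := by
    have h := hμlow ep
    rw [← hPSt, hH2S] at h
    exact h
  -- final assembly
  have hfinal : Eplus ≤ (1 - α*β/2)*D + 1/(1+α*γ) * (1/2 * P0) := by
    have m1 : Eplus ≤ D - α*dIw + Lf/2*(α^2*W2) + 1/2*PQ + α*CR + 1/2*(α^2*R2) := by
      rw [hEplus, hPplus]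
      linarith [hDplus]
    have m2 : -(α*dIw) + α*CR = α*(-A2 - H2 + X) := by
      rw [show -A2 - H2 + X = -dIw + CR from hTid.symm]
      ring
    have m3 : Q2 ≤ 4*(1-β)*A2 - 2*D := by
      linarith [hquadQ, hedDDs, hlow1, hbr2]
    have m4 : 1/(4*(1-β)) * Q2 ≤ A2 - (1+β)/2 * D := by
      have h := mul_le_mul_of_nonneg_left m3 (by positivity : (0:ℝ) ≤ 1/(4*(1-β)))
      have e1 : 1/(4*(1-β)) * (4*(1-β)*A2 - 2*D) = A2 - 1/(2*(1-β))*D := by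
        field_simp
        ring
      rw [e1] at h
      have e2 : (1+β)/2 ≤ 1/(2*(1-β)) := by
        rw [div_le_div_iff₀ (by norm_num) (by positivity)]
        linarith [sq_nonneg β]
      have e3 : (1+β)/2 * D ≤ 1/(2*(1-β)) * D := mul_le_mul_of_nonneg_right e2 hDnn
      linarith
    have m6 : -A2 - H2 + X ≤ -((1+β)/2)*D - β*H2 := by linarith [hJ1, m4]
    have m7 : α*(-A2 - H2 + X) ≤ α*(-((1+β)/2)*D - β*H2) :=
      mul_le_mul_of_nonneg_left m6 hα0.le
    have m8 : W2 ≤ 2*A2 + 2*H2 := by linarith [hquadW, hJ3]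
    have m9 : Z2 ≤ 2*A2 + 2*H2 := by linarith [hquadZ, hJ2, hz2A2]
    have m10 : R2 ≤ LS*(2*A2 + 2*H2) := by
      calc R2 ≤ LS * Z2 := hR2LS
      _ ≤ LS*(2*A2+2*H2) := mul_le_mul_of_nonneg_left m9 hLSpos.le
    have m11 : Lf/2*(α^2*W2) + 1/2*(α^2*R2) ≤ α^2*(Lf+LS)*A2 + α^2*(Lf+LS)*H2 := by
      have a1 := mul_le_mul_of_nonneg_left m8 (by positivity : (0:ℝ) ≤ Lf/2*α^2)
      have a2 := mul_le_mul_of_nonneg_left m10 (by positivity : (0:ℝ) ≤ 1/2*α^2)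
      linarith [a1, a2]
    have m12 : α^2*(Lf+LS)*A2 ≤ α*(β/2)*A2 := by
      have h := mul_le_mul_of_nonneg_right hK (mul_nonneg hα0.le hA2nn)
      linarith [h]
    have m13 : α^2*(Lf+LS)*H2 ≤ α*(β/2)*H2 := by
      have h := mul_le_mul_of_nonneg_right hK (mul_nonneg hα0.le hH2nn)
      linarith [h]
    have m14 : α*(β/2)*A2 ≤ α/2*D := by
      have h := mul_le_mul_of_nonneg_left hA2D (by positivity : (0:ℝ) ≤ α*(β/2))
      have e1 : α*(β/2)*(2*Lf*D) = α/2*D := by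
        rw [show α*(β/2)*(2*Lf*D) = (β*Lf)*(α*D) from by ring, hβLf]
        ring
      linarith
    have m15 : Eplus ≤ (1 - α*β/2)*D + 1/2*PQ - α*(β/2)*H2 := by
      linarith [m1, m2, m7, m11, m12, m13, m14]
    have m16 : α*(β/2)*(μt*PSt) ≤ α*(β/2)*H2 :=
      mul_le_mul_of_nonneg_left hμH2 (by positivity)
    have m17 : α*(β/2)*(μt*PSt) = α*γ/2 * PSt := by rw [hγ]; ring
    have m18 : α*γ/(2*(1+α*γ)) ≤ α*γ/2 := by
      rw [div_le_div_iff₀ (by positivity) (by norm_num)]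
      linarith [mul_nonneg hαγ0.le hαγ0.le]
    have m19 : 1/2*PQ - α*(β/2)*H2 ≤ 1/(1+α*γ)*(1/2*P0) := by
      have e1 : 1/2*PQ = 1/(1+α*γ)*(1/2*P0) + α*γ/(2*(1+α*γ)) * PSt := by
        rw [hPQ]
        field_simp
      have e2 : α*γ/(2*(1+α*γ)) * PSt ≤ α*γ/2 * PSt :=
        mul_le_mul_of_nonneg_right m18 hPStnn
      linarith [e1, e2, m16, m17]
    linarith [m15, m19]
  -- conclusion
  have hEeq : E = D + 1/2*P0 := by rw [hE, ← hD, ← hep, ← hP0]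
  have hρset : ∀ ρ' : ℝ, (1 - α*β/2) ≤ ρ' → 1/(1+α*γ) ≤ ρ' → Eplus ≤ ρ' * E := by
    intro ρ' h1 h2
    have t1 : (1-α*β/2)*D ≤ ρ'*D := mul_le_mul_of_nonneg_right h1 hDnn
    have t2 : 1/(1+α*γ)*(1/2*P0) ≤ ρ'*(1/2*P0) :=
      mul_le_mul_of_nonneg_right h2 (by linarith)
    rw [hEeq]
    linarith [hfinal, t1, t2]
  have hmin1 : min (α*γ/(1+α*γ)) (α*β) ≤ α*β := min_le_right _ _
  have hmin2 : min (α*γ/(1+α*γ)) (α*β) ≤ α*γ/(1+α*γ) := min_le_left _ _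
  have hmin0 : 0 < min (α*γ/(1+α*γ)) (α*β) :=
    lt_min (div_pos hαγ0 h1αγ) (mul_pos hα0 hβ0)
  have hρ1 : (1 - α*β/2) ≤ 1 - 1/2 * min (α*γ/(1 + α*γ)) (α*β) := by linarith
  have hρ2 : 1/(1+α*γ) ≤ 1 - 1/2 * min (α*γ/(1 + α*γ)) (α*β) := by
    have e1 : 1 - α*γ/(1+α*γ) = 1/(1+α*γ) := by
      field_simp
      ring
    rw [← e1]
    linarith [hmin2, hmin0]
  have hcon := hρset _ hρ1 hρ2
  exact ⟨⟨_, by linarith [hmin0], hcon⟩, fun _ => hcon⟩
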